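/- A bilateral weighted shift S with positive bounded weights has the single-valued extension property if and only if r₂⁻(S) ≤ r₃⁺(S), where r₂⁻(S) = liminf (1/β_{−n})^{1/n} and r₃⁺(S) = limsup β_n^{1/n}. -/

import Mathlib

set_option linter.unusedVariables false
set_option linter.unusedSectionVars false
set_option maxHeartbeats 1000000

open Filter
open scoped NNReal ENNReal

namespace BilatAux

variable {ω : ℤ → ℝ}

noncomputable def useq (ω : ℤ → ℝ) (n : ℕ) : ℝ :=
  (∏ i ∈ Finset.range n, ω (i : ℤ)) ^ ((n : ℝ)⁻¹)

noncomputable def vseq (ω : ℤ → ℝ) (n : ℕ) : ℝ :=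
  (∏ i ∈ Finset.range n, ω (-(i : ℤ) - 1)) ^ ((n : ℝ)⁻¹)

lemma useq_nonneg (hpos : ∀ n, 0 < ω n) (n : ℕ) : 0 ≤ useq ω n :=
  Real.rpow_nonneg (Finset.prod_nonneg fun i _ => (hpos _).le) _

lemma vseq_nonneg (hpos : ∀ n, 0 < ω n) (n : ℕ) : 0 ≤ vseq ω n :=
  Real.rpow_nonneg (Finset.prod_nonneg fun i _ => (hpos _).le) _

lemma seq_le_bound (hpos : ∀ n, 0 < ω n) {M : ℝ} (hM1 : 1 ≤ M)
    (f : ℕ → ℤ) (hf : ∀ i, ω (f i) ≤ M) (n : ℕ) :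
    (∏ i ∈ Finset.range n, ω (f i)) ^ ((n : ℝ)⁻¹) ≤ M := by
  rcases Nat.eq_zero_or_pos n with rfl | hn
  · simpa using hM1
  · have h1 : (∏ i ∈ Finset.range n, ω (f i)) ≤ M ^ n := by
      calc (∏ i ∈ Finset.range n, ω (f i)) ≤ ∏ i ∈ Finset.range n, M :=
            Finset.prod_le_prod (fun i _ => (hpos _).le) (fun i _ => hf i)
        _ = M ^ n := by simp
    calc (∏ i ∈ Finset.range n, ω (f i)) ^ ((n : ℝ)⁻¹)
        ≤ (M ^ n) ^ ((n : ℝ)⁻¹) :=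
          Real.rpow_le_rpow (Finset.prod_nonneg fun i _ => (hpos _).le) h1 (by positivity)
      _ = M := Real.pow_rpow_inv_natCast (by linarith) hn.ne'

lemma useq_bdd (hpos : ∀ n, 0 < ω n) (hbd : ∃ M : ℝ, ∀ n, ω n ≤ M) :
    IsBoundedUnder (· ≤ ·) atTop (useq ω) := by
  obtain ⟨M, hM⟩ := hbd
  exact isBoundedUnder_of ⟨max M 1, fun n => seq_le_bound hpos (le_max_right _ _) _
    (fun i => (hM _).trans (le_max_left _ _)) n⟩

lemma vseq_bdd (hpos : ∀ n, 0 < ω n) (hbd : ∃ M : ℝ, ∀ n, ω n ≤ M) :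
    IsBoundedUnder (· ≤ ·) atTop (vseq ω) := by
  obtain ⟨M, hM⟩ := hbd
  exact isBoundedUnder_of ⟨max M 1, fun n => seq_le_bound hpos (le_max_right _ _) _
    (fun i => (hM _).trans (le_max_left _ _)) n⟩

lemma useq_bdd_ge (hpos : ∀ n, 0 < ω n) :
    IsBoundedUnder (· ≥ ·) atTop (useq ω) :=
  isBoundedUnder_of ⟨0, fun n => useq_nonneg hpos n⟩

lemma vseq_bdd_ge (hpos : ∀ n, 0 < ω n) :
    IsBoundedUnder (· ≥ ·) atTop (vseq ω) :=
  isBoundedUnder_of ⟨0, fun n => vseq_nonneg hpos n⟩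

noncomputable def wb (ω : ℤ → ℝ) (n : ℤ) : ℝ :=
  if 0 ≤ n then ∏ i ∈ Finset.range n.toNat, ω (i : ℤ)
  else (∏ i ∈ Finset.range (-n).toNat, ω (-(i : ℤ) - 1))⁻¹

lemma wb_natCast (n : ℕ) : wb ω (n : ℤ) = ∏ i ∈ Finset.range n, ω (i : ℤ) := by
  simp [wb]

lemma wb_neg_natCast (n : ℕ) :
    wb ω (-(n : ℤ)) = (∏ i ∈ Finset.range n, ω (-(i : ℤ) - 1))⁻¹ := by
  rcases Nat.eq_zero_or_pos n with h | h
  · subst h; simp [wb]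
  · rw [wb, if_neg (by omega)]
    simp

lemma wb_pos (hpos : ∀ n, 0 < ω n) (n : ℤ) : 0 < wb ω n := by
  rw [wb]
  split
  · exact Finset.prod_pos fun i _ => hpos _
  · exact inv_pos.2 (Finset.prod_pos fun i _ => hpos _)

-- A = limsup useq, B = liminf vseq

lemma limsup_lt_imp (hpos : ∀ n, 0 < ω n) (hbd : ∃ M : ℝ, ∀ n, ω n ≤ M) {x : ℝ}
    (h : atTop.limsup (useq ω) < x) : ∀ᶠ n : ℕ in atTop, wb ω (n : ℤ) ≤ x ^ n := by
  filter_upwards [eventually_lt_of_limsup_lt h (useq_bdd hpos hbd)] with n hn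
  rcases Nat.eq_zero_or_pos n with rfl | hn0
  · simp [wb]
  · have h1 : (useq ω n) ^ n = wb ω (n : ℤ) := by
      rw [useq, wb_natCast]
      exact Real.rpow_inv_natCast_pow (Finset.prod_nonneg fun i _ => (hpos _).le) hn0.ne'
    rw [← h1]
    exact pow_le_pow_left₀ (useq_nonneg hpos n) hn.le n

lemma le_limsup_imp (hpos : ∀ n, 0 < ω n) (hbd : ∃ M : ℝ, ∀ n, ω n ≤ M) {y : ℝ}
    (hy : 0 < y) (h : ∀ᶠ n : ℕ in atTop, wb ω (n : ℤ) ≤ y ^ n) :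
    atTop.limsup (useq ω) ≤ y := by
  apply Filter.limsup_le_of_le ((useq_bdd_ge hpos).isCoboundedUnder_le)
  filter_upwards [h, eventually_ge_atTop 1] with n hn hn1
  have : useq ω n ≤ (y ^ n) ^ ((n : ℝ)⁻¹) := by
    rw [useq, ← wb_natCast]
    exact Real.rpow_le_rpow (wb_pos hpos _).le hn (by positivity)
  rwa [Real.pow_rpow_inv_natCast hy.le (by omega)] at this

lemma lt_liminf_imp (hpos : ∀ n, 0 < ω n) {x : ℝ} (hx : 0 < x)
    (h : x < atTop.liminf (vseq ω)) :
    ∀ᶠ n : ℕ in atTop, wb ω (-(n : ℤ)) ≤ (x⁻¹) ^ n := by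
  filter_upwards [eventually_lt_of_lt_liminf h (vseq_bdd_ge hpos)] with n hn
  rcases Nat.eq_zero_or_pos n with rfl | hn0
  · simp [wb]
  · have h1 : (vseq ω n) ^ n = ∏ i ∈ Finset.range n, ω (-(i : ℤ) - 1) := by
      rw [vseq]
      exact Real.rpow_inv_natCast_pow (Finset.prod_nonneg fun i _ => (hpos _).le) hn0.ne'
    have h2 : x ^ n ≤ ∏ i ∈ Finset.range n, ω (-(i : ℤ) - 1) := by
      rw [← h1]; exact pow_le_pow_left₀ hx.le hn.le n
    rw [wb_neg_natCast, inv_pow]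
    exact inv_anti₀ (by positivity) h2

lemma le_liminf_imp (hpos : ∀ n, 0 < ω n) (hbd : ∃ M : ℝ, ∀ n, ω n ≤ M) {y : ℝ}
    (hy : 0 < y) (h : ∀ᶠ n : ℕ in atTop, wb ω (-(n : ℤ)) ≤ (y⁻¹) ^ n) :
    y ≤ atTop.liminf (vseq ω) := by
  apply Filter.le_liminf_of_le ((vseq_bdd hpos hbd).isCoboundedUnder_ge)
  filter_upwards [h, eventually_ge_atTop 1] with n hn hn1
  have h2 : y ^ n ≤ ∏ i ∈ Finset.range n, ω (-(i : ℤ) - 1) := by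
    rw [wb_neg_natCast, inv_pow] at hn
    have hP : 0 < ∏ i ∈ Finset.range n, ω (-(i : ℤ) - 1) :=
      Finset.prod_pos fun i _ => hpos _
    rw [inv_le_inv₀ hP (by positivity)] at hn
    exact hn
  have : (y ^ n) ^ ((n : ℝ)⁻¹) ≤ vseq ω n :=
    Real.rpow_le_rpow (by positivity) h2 (by positivity)
  rwa [Real.pow_rpow_inv_natCast hy.le (by omega)] at this

lemma limsup_nonneg (hpos : ∀ n, 0 < ω n) (hbd : ∃ M : ℝ, ∀ n, ω n ≤ M) :
    0 ≤ atTop.limsup (useq ω) :=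
  le_limsup_of_frequently_le (Frequently.of_forall fun n => useq_nonneg hpos n)
    (useq_bdd hpos hbd)

lemma wb_zero : wb ω 0 = 1 := by simp [wb]

lemma wb_succ (hpos : ∀ n, 0 < ω n) (n : ℤ) : wb ω (n + 1) = ω n * wb ω n := by
  rcases le_or_gt 0 n with h | h
  · obtain ⟨m, rfl⟩ := Int.eq_ofNat_of_zero_le h
    rw [show (m : ℤ) + 1 = ((m + 1 : ℕ) : ℤ) by push_cast; ring, wb_natCast, wb_natCast,
      Finset.prod_range_succ]
    ring
  · obtain ⟨m, hm⟩ : ∃ m : ℕ, n = -(m : ℤ) - 1 := ⟨(-(n+1)).toNat, by omega⟩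
    subst hm
    rw [show -(m : ℤ) - 1 + 1 = -(m : ℤ) by ring, wb_neg_natCast,
      show -(m : ℤ) - 1 = -((m+1 : ℕ) : ℤ) by push_cast; ring, wb_neg_natCast,
      Finset.prod_range_succ]
    rw [mul_inv, mul_comm (∏ i ∈ Finset.range m, ω (-(i : ℤ) - 1))⁻¹, show (-((m+1 : ℕ) : ℤ)) = -(m:ℤ) - 1 by push_cast; ring, ← mul_assoc,
      mul_inv_cancel₀ (hpos (-(m : ℤ) - 1)).ne', one_mul]

variable {H : Type*} [NormedAddCommGroup H] [InnerProductSpace ℂ H] [CompleteSpace H]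
local notation "⟪" x ", " y "⟫" => @inner ℂ _ _ x y

lemma repr_of_hasSum (e : HilbertBasis ℤ ℂ H) {c : ℤ → ℂ} {y : H}
    (h : HasSum (fun n => c n • e n) y) (m : ℤ) : e.repr y m = c m := by
  have h2 := (innerSL ℂ (e m)).hasSum h
  have h3 : (fun n : ℤ => (innerSL ℂ (e m)) (c n • e n)) =
      fun n : ℤ => if n = m then c m else 0 := by
    funext n
    have horth := orthonormal_iff_ite.mp e.orthonormal m n
    simp only [innerSL_apply_apply, inner_smul_right, horth]
    by_cases hnm : n = m
    · subst hnm; simp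
    · simp [hnm, Ne.symm hnm]
  rw [h3] at h2
  rw [e.repr_apply_apply, ← innerSL_apply_apply (𝕜 := ℂ)]
  exact h2.unique (hasSum_ite_eq m (c m))

lemma hasSum_shift (e : HilbertBasis ℤ ℂ H) (S : H →L[ℂ] H) (ω : ℤ → ℝ)
    (hS : ∀ n, S (e n) = (ω n : ℂ) • e (n + 1)) (x : H)
    {c : ℤ → ℂ} (h : HasSum (fun n => c n • e n) x) :
    HasSum (fun n : ℤ => ((ω (n - 1) : ℂ) * c (n - 1)) • e n) (S x) := by
  have h2 := S.hasSum h
  simp only [map_smul, hS] at h2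
  rw [← (Equiv.addRight (1 : ℤ)).hasSum_iff]
  have heq : ((fun n : ℤ => ((ω (n - 1) : ℂ) * c (n - 1)) • e n) ∘ ⇑(Equiv.addRight (1 : ℤ)))
      = fun b : ℤ => c b • (ω b : ℂ) • e (b + 1) := by
    funext n
    simp only [Equiv.coe_addRight, Function.comp_apply, add_sub_cancel_right, smul_smul,
      mul_comm]
  rw [heq]
  exact h2

/-- The basic recursion for eigenvector coefficients. -/
lemma coeff_rec (e : HilbertBasis ℤ ℂ H) (S : H →L[ℂ] H) (ω : ℤ → ℝ)
    (hS : ∀ n, S (e n) = (ω n : ℂ) • e (n + 1)) (x : H) (μ : ℂ)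
    (hx : S x = μ • x) (m : ℤ) :
    (ω (m - 1) : ℂ) * e.repr x (m - 1) = μ * e.repr x m := by
  have h1 := hasSum_shift e S ω hS x (e.hasSum_repr x)
  rw [hx] at h1
  have h2 : e.repr (μ • x) m = (ω (m - 1) : ℂ) * e.repr x (m - 1) :=
    repr_of_hasSum e h1 m
  rw [map_smul] at h2
  rw [← h2]
  simp

lemma shift_injective (e : HilbertBasis ℤ ℂ H) (S : H →L[ℂ] H) (ω : ℤ → ℝ)
    (hpos : ∀ n, 0 < ω n)
    (hS : ∀ n, S (e n) = (ω n : ℂ) • e (n + 1)) (x : H) (hx : S x = 0) : x = 0 := by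
  have h0 : S x = (0 : ℂ) • x := by rw [hx, zero_smul]
  have h1 : ∀ m : ℤ, e.repr x m = 0 := by
    intro m
    have := coeff_rec e S ω hS x 0 h0 (m + 1)
    simp only [add_sub_cancel_right, zero_mul] at this
    have hω : ((ω m : ℂ)) ≠ 0 := by
      exact_mod_cast (hpos m).ne'
    exact (mul_eq_zero.mp this).resolve_left hω
  have : e.repr x = 0 := by
    ext m
    simpa using h1 m
  rwa [LinearIsometryEquiv.map_eq_zero_iff] at this

lemma eig_formula (e : HilbertBasis ℤ ℂ H) (S : H →L[ℂ] H) (ω : ℤ → ℝ)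
    (hpos : ∀ n, 0 < ω n)
    (hS : ∀ n, S (e n) = (ω n : ℂ) • e (n + 1)) (x : H) (μ : ℂ) (hμ : μ ≠ 0)
    (hx : S x = μ • x) (n : ℤ) :
    e.repr x n = (wb ω n : ℂ) * μ ^ (-n) * e.repr x 0 := by
  induction n using Int.induction_on with
  | zero => simp [wb_zero]
  | succ k ih =>
    have hrec := coeff_rec e S ω hS x μ hx ((k : ℤ) + 1)
    rw [add_sub_cancel_right, ih] at hrec
    have hω : ((ω (k : ℤ) : ℂ)) ≠ 0 := by exact_mod_cast (hpos _).ne'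
    have hwb : (wb ω ((k : ℤ) + 1) : ℂ) = (ω (k : ℤ) : ℂ) * (wb ω (k : ℤ) : ℂ) := by
      rw [← Complex.ofReal_mul, wb_succ hpos]
    have hz : μ ^ (-((k : ℤ) + 1)) = μ ^ (-(k : ℤ)) * μ⁻¹ := by
      rw [show -((k : ℤ) + 1) = -(k : ℤ) + (-1) by ring, zpow_add₀ hμ, zpow_neg_one]
    rw [hwb, hz]
    field_simp at hrec ⊢
    linear_combination -hrec
  | pred k ih =>
    have hrec := coeff_rec e S ω hS x μ hx (-(k : ℤ))
    rw [ih] at hrec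
    have hω : ((ω (-(k : ℤ) - 1) : ℂ)) ≠ 0 := by exact_mod_cast (hpos _).ne'
    have hwb : (wb ω (-(k : ℤ)) : ℂ) = (ω (-(k : ℤ) - 1) : ℂ) * (wb ω (-(k : ℤ) - 1) : ℂ) := by
      rw [← Complex.ofReal_mul, ← wb_succ hpos, sub_add_cancel]
    have hz : μ ^ (-(-(k : ℤ) - 1)) = μ ^ ((k : ℤ)) * μ := by
      rw [show -(-(k : ℤ) - 1) = (k : ℤ) + 1 by ring, zpow_add₀ hμ, zpow_one]
    have hzz : μ ^ (-(-(k:ℤ))) = μ ^ ((k:ℤ)) := by norm_num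
    rw [hwb, hzz] at hrec
    apply mul_left_cancel₀ hω
    rw [hrec, hz]
    ring

lemma repr_small (e : HilbertBasis ℤ ℂ H) (x : H) {g : ℕ → ℤ} (hg : Function.Injective g)
    {c : ℝ} (hc : 0 < c) : ∀ᶠ n in atTop, ‖(e.repr x : ℤ → ℂ) (g n)‖ ≤ c := by
  have hmem : Memℓp (e.repr x : ℤ → ℂ) 2 := lp.memℓp (e.repr x)
  have hsum : Summable fun m : ℤ => ‖(e.repr x : ℤ → ℂ) m‖ ^ ((2 : ENNReal).toReal) :=
    (memℓp_gen_iff (by norm_num)).mp hmem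
  have h1 : Tendsto (fun m : ℤ => ‖(e.repr x : ℤ → ℂ) m‖ ^ ((2 : ENNReal).toReal))
      cofinite (nhds 0) := hsum.tendsto_cofinite_zero
  have h2 : Tendsto (fun n : ℕ => ‖(e.repr x : ℤ → ℂ) (g n)‖ ^ ((2 : ENNReal).toReal))
      atTop (nhds 0) := by
    rw [← Nat.cofinite_eq_atTop]
    exact h1.comp hg.tendsto_cofinite
  have h3 := h2.eventually_le_const (show (0:ℝ) < c ^ ((2 : ENNReal).toReal) by positivity)
  filter_upwards [h3] with n hn
  have h4 : ‖(e.repr x : ℤ → ℂ) (g n)‖ ^ (2:ℝ) ≤ c ^ (2:ℝ) := by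
    simpa using hn
  have h5 := Real.rpow_le_rpow (by positivity) h4 (show (0:ℝ) ≤ 2⁻¹ by norm_num)
  rw [← Real.rpow_mul (norm_nonneg _), ← Real.rpow_mul hc.le] at h5
  norm_num at h5
  exact h5


lemma eig_bounds (e : HilbertBasis ℤ ℂ H) (S : H →L[ℂ] H) (ω : ℤ → ℝ)
    (hpos : ∀ n, 0 < ω n) (hbd : ∃ M : ℝ, ∀ n, ω n ≤ M)
    (hS : ∀ n, S (e n) = (ω n : ℂ) • e (n + 1)) (x : H) (μ : ℂ) (hμ : μ ≠ 0)
    (hx0 : x ≠ 0) (hx : S x = μ • x) :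
    atTop.limsup (useq ω) ≤ ‖μ‖ ∧ ‖μ‖ ≤ atTop.liminf (vseq ω) := by
  set x0 : ℂ := e.repr x 0 with hx0def
  have hform := eig_formula e S ω hpos hS x μ hμ hx
  have hx0ne : x0 ≠ 0 := by
    intro h0
    apply hx0
    have : ∀ n : ℤ, (e.repr x : ℤ → ℂ) n = 0 := by
      intro n; rw [hform n, ← hx0def, h0, mul_zero]
    have hz : e.repr x = 0 := by ext n; simpa using this n
    rwa [LinearIsometryEquiv.map_eq_zero_iff] at hz
  have hμn : (0:ℝ) < ‖μ‖ := norm_pos_iff.mpr hμ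
  have hnorm : ∀ n : ℤ, ‖(e.repr x : ℤ → ℂ) n‖ = wb ω n * ‖μ‖ ^ (-n) * ‖x0‖ := by
    intro n
    rw [hform n, norm_mul, norm_mul, norm_zpow]
    congr 2
    rw [Complex.norm_real, Real.norm_of_nonneg (wb_pos hpos n).le]
  constructor
  · apply le_limsup_imp hpos hbd hμn
    have hev := repr_small e x (g := fun n : ℕ => (n : ℤ))
      (fun a b h => Nat.cast_injective h) (norm_pos_iff.mpr hx0ne)
    filter_upwards [hev] with n hn
    rw [hnorm] at hn
    have h1 : wb ω (n : ℤ) * ‖μ‖ ^ (-(n:ℤ)) ≤ 1 := by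
      nlinarith [norm_pos_iff.mpr hx0ne, wb_pos hpos (n:ℤ), zpow_pos hμn (-(n:ℤ))]
    rw [zpow_neg, zpow_natCast] at h1
    calc wb ω (n:ℤ) = wb ω (n:ℤ) * (‖μ‖ ^ n)⁻¹ * ‖μ‖ ^ n := by
          rw [mul_assoc, inv_mul_cancel₀ (by positivity), mul_one]
      _ ≤ 1 * ‖μ‖ ^ n := by
          apply mul_le_mul_of_nonneg_right h1 (by positivity)
      _ = ‖μ‖ ^ n := one_mul _
  · apply le_liminf_imp hpos hbd hμn
    have hev := repr_small e x (g := fun n : ℕ => -(n : ℤ))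
      (fun a b h => Nat.cast_injective (neg_injective h)) (norm_pos_iff.mpr hx0ne)
    filter_upwards [hev] with n hn
    rw [hnorm] at hn
    have h1 : wb ω (-(n:ℤ)) * ‖μ‖ ^ ((n:ℤ)) ≤ 1 := by
      rw [neg_neg] at hn
      nlinarith [norm_pos_iff.mpr hx0ne, wb_pos hpos (-(n:ℤ)), zpow_pos hμn ((n:ℤ))]
    rw [zpow_natCast] at h1
    calc wb ω (-(n:ℤ)) = wb ω (-(n:ℤ)) * ‖μ‖ ^ n * (‖μ‖ ^ n)⁻¹ := by
          rw [mul_assoc, mul_inv_cancel₀ (by positivity), mul_one]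
      _ ≤ 1 * (‖μ‖ ^ n)⁻¹ := by
          apply mul_le_mul_of_nonneg_right h1 (by positivity)
      _ = (‖μ‖⁻¹) ^ n := by rw [one_mul, inv_pow]




/-- Power series with vector coefficients. -/
noncomputable def pser (v : ℕ → H) : FormalMultilinearSeries ℂ ℂ H :=
  fun n => ContinuousMultilinearMap.mkPiRing ℂ (Fin n) (v n)

lemma pser_norm (v : ℕ → H) (n : ℕ) : ‖pser v n‖ = ‖v n‖ :=
  ContinuousMultilinearMap.norm_mkPiRing (v n)

lemma pser_apply (v : ℕ → H) (n : ℕ) (z : ℂ) : (pser v n) (fun _ => z) = z ^ n • v n := by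
  rw [pser, ContinuousMultilinearMap.mkPiRing_apply]
  congr 1
  simp

lemma pser_radius (v : ℕ → H) {x c : ℝ} (hx : 0 ≤ x) (hc0 : 0 ≤ c) (hc1 : c < 1)
    (hv : ∀ᶠ n : ℕ in atTop, ‖v n‖ * x ^ n ≤ c ^ n) :
    (x.toNNReal : ℝ≥0∞) ≤ (pser v).radius := by
  apply FormalMultilinearSeries.le_radius_of_tendsto (l := 0)
  have hteq : ∀ n : ℕ, ‖pser v n‖ * (x.toNNReal : ℝ) ^ n = ‖v n‖ * x ^ n := by
    intro n
    rw [pser_norm, Real.coe_toNNReal _ hx]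
  simp only [hteq]
  apply squeeze_zero' (Eventually.of_forall fun n => by positivity)
    hv (tendsto_pow_atTop_nhds_zero_of_lt_one hc0 hc1)

lemma mem_ball_of_lt_radius_aux {z : ℂ} {x : ℝ} (hzx : ‖z‖ < x)
    {p : FormalMultilinearSeries ℂ ℂ H} (hx : (x.toNNReal : ℝ≥0∞) ≤ p.radius) :
    z ∈ Metric.eball (0 : ℂ) p.radius := by
  rw [mem_eball_zero_iff]
  refine lt_of_lt_of_le ?_ hx
  change ((‖z‖₊ : ℝ≥0) : ℝ≥0∞) < _
  rw [ENNReal.coe_lt_coe, ← norm_toNNReal]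
  exact (Real.toNNReal_lt_toNNReal_iff_of_nonneg (norm_nonneg _)).mpr hzx



lemma forward_construction (e : HilbertBasis ℤ ℂ H) (S : H →L[ℂ] H) (ω : ℤ → ℝ)
    (hpos : ∀ n, 0 < ω n) (hbd : ∃ M : ℝ, ∀ n, ω n ≤ M)
    (hS : ∀ n, S (e n) = (ω n : ℂ) • e (n + 1))
    (hAB : atTop.limsup (useq ω) < atTop.liminf (vseq ω)) :
    ∃ (U : Set ℂ) (f : ℂ → H), IsOpen U ∧ AnalyticOnNhd ℂ f U ∧
      (∀ z ∈ U, S (f z) = z • f z) ∧ ∃ z ∈ U, f z ≠ 0 := by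
  set A := atTop.limsup (useq ω) with hAdef
  set B := atTop.liminf (vseq ω) with hBdef
  have hA0 : 0 ≤ A := limsup_nonneg hpos hbd
  set vg : ℕ → H := fun n => ((wb ω (-(n:ℤ)) : ℝ) : ℂ) • e (-(n:ℤ)) with hvg
  set vh : ℕ → H := fun n => if n = 0 then 0 else ((wb ω (n:ℤ) : ℝ) : ℂ) • e (n:ℤ) with hvh
  have hnorme : ∀ n : ℤ, ‖e n‖ = 1 := fun n => e.orthonormal.1 n
  have hvgn : ∀ n, ‖vg n‖ = wb ω (-(n:ℤ)) := by
    intro n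
    rw [hvg]
    simp only [norm_smul, Complex.norm_real, hnorme, mul_one]
    exact abs_of_pos (wb_pos hpos _)
  have hvhn : ∀ n, ‖vh n‖ ≤ wb ω (n:ℤ) := by
    intro n
    rw [hvh]
    by_cases h0 : n = 0
    · simp [h0, (wb_pos hpos 0).le]
    · simp only [h0, if_false, norm_smul, Complex.norm_real, hnorme, mul_one]
      rw [Real.norm_eq_abs, abs_of_pos (wb_pos hpos _)]
  set pg := pser vg with hpg
  set ph := pser vh with hph
  set U : Set ℂ := (fun z : ℂ => ‖z‖) ⁻¹' (Set.Ioo A B) with hU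
  have hUopen : IsOpen U := IsOpen.preimage continuous_norm isOpen_Ioo
  have hUmem : ∀ z : ℂ, z ∈ U ↔ A < ‖z‖ ∧ ‖z‖ < B := fun z => Iff.rfl
  -- membership of z in the g-ball
  have hgball : ∀ z : ℂ, ‖z‖ < B → z ∈ Metric.eball (0:ℂ) pg.radius := by
    intro z hz
    obtain ⟨x1, hx1a, hx1b⟩ := exists_between hz
    obtain ⟨x2, hx2a, hx2b⟩ := exists_between hx1b
    have hx1pos : 0 < x1 := lt_of_le_of_lt (norm_nonneg z) hx1a
    have hx2pos : 0 < x2 := hx1pos.trans hx2a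
    apply mem_ball_of_lt_radius_aux hx1a
    apply pser_radius vg hx1pos.le (by positivity : (0:ℝ) ≤ x1 / x2)
      (by rw [div_lt_one hx2pos]; exact hx2a)
    filter_upwards [lt_liminf_imp hpos hx2pos hx2b] with n hn
    rw [hvgn n]
    calc wb ω (-(n:ℤ)) * x1 ^ n ≤ (x2⁻¹) ^ n * x1 ^ n :=
          mul_le_mul_of_nonneg_right hn (by positivity)
      _ = (x1 / x2) ^ n := by rw [← mul_pow, mul_comm x2⁻¹ x1, div_eq_mul_inv]
  -- membership of z⁻¹ in the h-ball
  have hhball : ∀ z : ℂ, A < ‖z‖ → z⁻¹ ∈ Metric.eball (0:ℂ) ph.radius := by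
    intro z hz
    obtain ⟨x2, hx2a, hx2b⟩ := exists_between hz
    obtain ⟨x1, hx1a, hx1b⟩ := exists_between hx2b
    have hx2pos : 0 < x2 := lt_of_le_of_lt hA0 hx2a
    have hx1pos : 0 < x1 := hx2pos.trans hx1a
    have hzpos : 0 < ‖z‖ := hx1pos.trans hx1b
    have hinv : ‖z⁻¹‖ < x1⁻¹ := by
      rw [norm_inv]
      exact inv_strictAnti₀ hx1pos hx1b
    apply mem_ball_of_lt_radius_aux hinv
    apply pser_radius vh (by positivity : (0:ℝ) ≤ x1⁻¹) (by positivity : (0:ℝ) ≤ x2 / x1)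
      (by rw [div_lt_one hx1pos]; exact hx1a)
    filter_upwards [limsup_lt_imp hpos hbd hx2a] with n hn
    calc ‖vh n‖ * (x1⁻¹) ^ n ≤ x2 ^ n * (x1⁻¹) ^ n :=
          mul_le_mul_of_nonneg_right ((hvhn n).trans hn) (by positivity)
      _ = (x2 / x1) ^ n := by rw [← mul_pow, div_eq_mul_inv]
  set f : ℂ → H := fun z => pg.sum z + ph.sum z⁻¹ with hf
  -- analyticity
  have hana : AnalyticOnNhd ℂ f U := by
    intro z hz
    obtain ⟨hz1, hz2⟩ := (hUmem z).mp hz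
    have hz0 : z ≠ 0 := by
      intro h; rw [h, norm_zero] at hz1; exact absurd hz1 (not_lt.mpr hA0)
    have hg1 : AnalyticAt ℂ pg.sum z := by
      have hmem := hgball z hz2
      have hrad : 0 < pg.radius := lt_of_le_of_lt zero_le (Metric.mem_eball.mp hmem)
      exact (pg.hasFPowerSeriesOnBall hrad).analyticOnNhd z hmem
    have hh1 : AnalyticAt ℂ (fun w : ℂ => ph.sum w⁻¹) z := by
      have hmem := hhball z hz1
      have hrad : 0 < ph.radius := lt_of_le_of_lt zero_le (Metric.mem_eball.mp hmem)
      have h2 : AnalyticAt ℂ ph.sum z⁻¹ :=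
        (ph.hasFPowerSeriesOnBall hrad).analyticOnNhd z⁻¹ hmem
      exact h2.comp (analyticAt_inv hz0)
    exact hg1.add hh1
  -- the ℤ-indexed expansion
  set c : ℂ → ℤ → ℂ := fun z n => ((wb ω n : ℝ) : ℂ) * z ^ (-n) with hc
  have hFsum : ∀ z ∈ U, HasSum (fun n : ℤ => c z n • e n) (f z) := by
    intro z hz
    obtain ⟨hz1, hz2⟩ := (hUmem z).mp hz
    have hz0 : z ≠ 0 := by
      intro h; rw [h, norm_zero] at hz1; exact absurd hz1 (not_lt.mpr hA0)
    -- g part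
    have hgmem := hgball z hz2
    have hgrad : 0 < pg.radius := lt_of_le_of_lt zero_le (Metric.mem_eball.mp hgmem)
    have hg1 := (pg.hasFPowerSeriesOnBall hgrad).hasSum (y := z) hgmem
    rw [zero_add] at hg1
    have hg2 : HasSum (fun n : ℕ => c z (-(n:ℤ)) • e (-(n:ℤ))) (pg.sum z) := by
      have heq : (fun n : ℕ => (pg n) fun _ => z) =
          fun n : ℕ => c z (-(n:ℤ)) • e (-(n:ℤ)) := by
        funext n
        simp only [hpg, pser_apply, hvg, hc, smul_smul, neg_neg, zpow_natCast]
        rw [mul_comm]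
      rwa [heq] at hg1
    -- h part
    have hhmem := hhball z hz1
    have hhrad : 0 < ph.radius := lt_of_le_of_lt zero_le (Metric.mem_eball.mp hhmem)
    have hh1 := (ph.hasFPowerSeriesOnBall hhrad).hasSum (y := z⁻¹) hhmem
    rw [zero_add] at hh1
    have hh1' : HasSum (fun n : ℕ => (z⁻¹) ^ n • vh n) (ph.sum z⁻¹) := by
      have heq : (fun n : ℕ => (ph n) fun _ => z⁻¹) = fun n : ℕ => (z⁻¹) ^ n • vh n := by
        funext n; rw [hph, pser_apply]
      rwa [heq] at hh1
    have hh2 := hh1'.update 0 (c z 0 • e 0)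
    have hupdeq : Function.update (fun n : ℕ => (z⁻¹) ^ n • vh n) 0 (c z 0 • e 0) =
        fun n : ℕ => c z (n:ℤ) • e (n:ℤ) := by
      funext n
      rcases Nat.eq_zero_or_pos n with rfl | hn0
      · rw [Function.update_self]; norm_num
      · rw [Function.update_of_ne hn0.ne']
        simp only [hvh, if_neg hn0.ne', hc, smul_smul]
        congr 1
        rw [mul_comm, inv_pow, ← zpow_natCast z n, ← zpow_neg]
    rw [hupdeq] at hh2
    have hh3 : HasSum (fun n : ℕ => c z (n:ℤ) • e (n:ℤ))
        (c z 0 • e 0 + ph.sum z⁻¹) := by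
      have : vh 0 = 0 := by rw [hvh]; simp
      rw [show (z⁻¹) ^ (0:ℕ) • vh 0 = (0:H) by rw [this, smul_zero]] at hh2
      rwa [sub_zero] at hh2
    -- shift the g part
    have hg3 : HasSum (fun n : ℕ => c z (-((n:ℤ) + 1)) • e (-((n:ℤ) + 1)))
        (pg.sum z - c z 0 • e 0) := by
      have h4 := (hasSum_nat_add_iff' (f := fun n : ℕ => c z (-(n:ℤ)) • e (-(n:ℤ)))
        (g := pg.sum z) 1).mpr hg2
      simp only [Finset.range_one, Finset.sum_singleton, Nat.cast_zero, neg_zero] at h4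
      have heq : (fun n : ℕ => c z (-((n + 1 : ℕ) : ℤ)) • e (-((n + 1 : ℕ) : ℤ))) =
          fun n : ℕ => c z (-((n:ℤ) + 1)) • e (-((n:ℤ) + 1)) := by
        funext n; norm_num
      rwa [heq] at h4
    have hFS := HasSum.of_nat_of_neg_add_one (f := fun n : ℤ => c z n • e n) hh3 hg3
    have hval : (c z 0 • e 0 + ph.sum z⁻¹) + (pg.sum z - c z 0 • e 0) = f z := by
      rw [hf]; abel
    rwa [hval] at hFS
  -- the eigen equation
  have heig : ∀ z ∈ U, S (f z) = z • f z := by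
    intro z hz
    obtain ⟨hz1, hz2⟩ := (hUmem z).mp hz
    have hz0 : z ≠ 0 := by
      intro h; rw [h, norm_zero] at hz1; exact absurd hz1 (not_lt.mpr hA0)
    have hF := hFsum z hz
    have hSf := hasSum_shift e S ω hS _ hF
    have hzf : HasSum (fun n : ℤ => (z * c z n) • e n) (z • f z) := by
      have := hF.const_smul z
      simpa only [smul_smul] using this
    have heqterm : (fun n : ℤ => ((ω (n - 1) : ℂ) * c z (n - 1)) • e n) =
        fun n : ℤ => (z * c z n) • e n := by
      funext n
      congr 1
      simp only [hc]
      have hwb : ((wb ω n : ℝ) : ℂ) = (ω (n-1) : ℂ) * ((wb ω (n-1) : ℝ) : ℂ) := by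
        rw [← Complex.ofReal_mul, ← wb_succ hpos, sub_add_cancel]
      have hzp : z ^ (-(n - 1)) = z ^ (-n) * z := by
        rw [show -(n - 1) = -n + 1 by ring, zpow_add₀ hz0, zpow_one]
      rw [hwb, hzp]
      ring
    rw [heqterm] at hSf
    exact hSf.unique hzf
  -- nonvanishing
  refine ⟨U, f, hUopen, hana, heig, ?_⟩
  have hABlt : A < B := hAB
  set t : ℝ := (A + B) / 2 with ht
  have htA : A < t := by rw [ht]; linarith
  have htB : t < B := by rw [ht]; linarith
  have htpos : 0 < t := lt_of_le_of_lt hA0 htA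
  have hzU : ((t : ℝ) : ℂ) ∈ U := by
    rw [hUmem]
    rw [Complex.norm_real, Real.norm_of_nonneg htpos.le]
    exact ⟨htA, htB⟩
  refine ⟨((t : ℝ) : ℂ), hzU, ?_⟩
  intro hzero
  have h1 : e.repr (f ((t : ℝ) : ℂ)) 0 = c ((t : ℝ) : ℂ) 0 :=
    repr_of_hasSum e (hFsum _ hzU) 0
  rw [hzero] at h1
  have h2 : c ((t : ℝ) : ℂ) 0 = 1 := by
    simp only [hc]; norm_num [wb_zero]
  rw [h2] at h1
  simp at h1

end BilatAux


open Filter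

section Defs

variable {X : Type*} [NormedAddCommGroup X] [NormedSpace ℂ X]

/-- `T` has the single-valued extension property. -/
def HasSVEP (T : X →L[ℂ] X) : Prop :=
  ∀ U : Set ℂ, IsOpen U → ∀ f : ℂ → X, AnalyticOnNhd ℂ f U →
    (∀ z ∈ U, (T - z • (1 : X →L[ℂ] X)) (f z) = 0) → ∀ z ∈ U, f z = 0

end Defs

variable {H : Type*} [NormedAddCommGroup H] [InnerProductSpace ℂ H] [CompleteSpace H]

/-- A bilateral weighted shift `S` with positive bounded weights has the single-valued
extension property if and only if `r₂⁻(S) ≤ r₃⁺(S)`, where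
`r₂⁻(S) = liminf (1/β₋ₙ)^(1/n) = liminf (ω (-n) ⋯ ω (-1))^(1/n)` and
`r₃⁺(S) = limsup (βₙ)^(1/n) = limsup (ω 0 ⋯ ω (n-1))^(1/n)`. -/
theorem bilateral_svep_iff (S : H →L[ℂ] H)
    (e : HilbertBasis ℤ ℂ H) (ω : ℤ → ℝ) (hpos : ∀ n, 0 < ω n)
    (hbd : ∃ M : ℝ, ∀ n, ω n ≤ M)
    (hS : ∀ n, S (e n) = (ω n : ℂ) • e (n + 1)) :
    HasSVEP S ↔
      (atTop.liminf fun n : ℕ =>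
          (∏ i ∈ Finset.range n, ω (-(i : ℤ) - 1)) ^ ((n : ℝ)⁻¹)) ≤
        (atTop.limsup fun n : ℕ =>
          (∏ i ∈ Finset.range n, ω (i : ℤ)) ^ ((n : ℝ)⁻¹)) := by
  constructor
  · intro hsvep
    by_contra hAB
    push_neg at hAB
    obtain ⟨U, f, hUopen, hana, heig, z₀, hz₀U, hz₀⟩ :=
      BilatAux.forward_construction e S ω hpos hbd hS hAB
    exact hz₀ (hsvep U hUopen f hana (fun z hz => by
      rw [ContinuousLinearMap.sub_apply, ContinuousLinearMap.smul_apply,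
        ContinuousLinearMap.one_apply, heig z hz, sub_self]) z₀ hz₀U)
  · intro hBA U hUopen f hana hker z hzU
    by_contra hfz
    have hSz : ∀ w ∈ U, S (f w) = w • f w := by
      intro w hw
      have := hker w hw
      rwa [ContinuousLinearMap.sub_apply, ContinuousLinearMap.smul_apply,
        ContinuousLinearMap.one_apply, sub_eq_zero] at this
    have key : ∀ w ∈ U, f w ≠ 0 → ‖w‖ = atTop.limsup (BilatAux.useq ω) := by
      intro w hw hfw
      have hsw := hSz w hw
      have hw0 : w ≠ 0 := by
        intro h
        apply hfw
        apply BilatAux.shift_injective e S ω hpos hS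
        rw [hsw, h, zero_smul]
      have hb := BilatAux.eig_bounds e S ω hpos hbd hS (f w) w hw0 hfw hsw
      exact le_antisymm (le_trans hb.2 hBA) hb.1
    have hzn := key z hzU hfz
    have hz0 : z ≠ 0 := by
      intro h
      apply hfz
      apply BilatAux.shift_injective e S ω hpos hS
      rw [hSz z hzU, h, zero_smul]
    have hzpos : 0 < ‖z‖ := norm_pos_iff.mpr hz0
    have hev : ∀ᶠ w in nhds z, ‖w‖ = atTop.limsup (BilatAux.useq ω) := by
      have h1 : ∀ᶠ w in nhds z, f w ≠ 0 := ((hana z hzU).continuousAt).eventually_ne hfz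
      filter_upwards [h1, hUopen.mem_nhds hzU] with w hw1 hw2 using key w hw2 hw1
    have hcont : Filter.Tendsto (fun t : ℝ => z * ((1 + t : ℝ) : ℂ)) (nhds 0) (nhds z) := by
      have hcnt : Continuous fun t : ℝ => z * ((1 + t : ℝ) : ℂ) := by continuity
      have h0 : z * ((1 + (0:ℝ) : ℝ) : ℂ) = z := by norm_num
      simpa [h0] using hcnt.tendsto 0
    have hev2 := hcont.eventually hev
    obtain ⟨t, ht1, ht2⟩ := ((hev2.filter_mono (nhdsWithin_le_nhds (s := Set.Ioi (0:ℝ)))).and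
      eventually_mem_nhdsWithin).exists
    have htpos : 0 < t := Set.mem_Ioi.mp ht2
    rw [norm_mul, Complex.norm_real, Real.norm_of_nonneg (by linarith)] at ht1
    rw [← hzn] at ht1
    nlinarith
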